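/- Let 𝒦 ⊆ {−K,…,K} with |𝒦| ≥ 3 and let T be a configuration of particles in Ω. Then the set of potential ghost particles of T, namely ∪_{P ∈ Ω} G(T ∪ {P}), where G(T') denotes the set of ghost particles of the configuration T' with respect to 𝒦, is a finite set. -/

import Mathlib

open MeasureTheory Complex Real Set

noncomputable section

/-- Phase space: positions and velocities in `ℝ^d`. -/
abbrev PS (d : ℕ) := (Fin d → ℝ) × (Fin d → ℝ)

/-- The phase-space domain `Ω`. -/
def Omega (d K : ℕ) (τ : ℝ) : Set (PS d) :=
  {p | ∀ k : ℤ, |k| ≤ (K : ℤ) → ∀ j, p.1 j + (k : ℝ) * τ * p.2 j ∈ Set.Icc (0 : ℝ) 1}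

/-- The affine set `L_{i,k}` attached to a particle `p₀` and a time sample `k`. -/
def Lset (d K : ℕ) (τ : ℝ) (p₀ : PS d) (k : ℤ) : Set (PS d) :=
  {p ∈ Omega d K τ | ∀ j, (p.1 j - p₀.1 j) + (k : ℝ) * τ * (p.2 j - p₀.2 j) = 0}

/-- `g` is a ghost particle of the configuration `P` with respect to the
set of time samples `Ks`. -/
def IsGhost {d K N : ℕ} (τ : ℝ) (P : Fin N → PS d) (Ks : Finset ℤ) (g : PS d) : Prop :=
  g ∈ Omega d K τ ∧ ∃ ι : ℤ → Fin N, Set.InjOn ι (Ks : Set ℤ) ∧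
    (⋂ k ∈ Ks, Lset d K τ (P (ι k)) k) = {g}

/-- Integral of a complex function against a complex measure, via the Jordan
decompositions of the real and imaginary parts. -/
def cintegral {α : Type*} [MeasurableSpace α] (μ : ComplexMeasure α) (f : α → ℂ) : ℂ :=
  ((∫ x, f x ∂(ComplexMeasure.re μ).toJordanDecomposition.posPart)
      - ∫ x, f x ∂(ComplexMeasure.re μ).toJordanDecomposition.negPart)
    + Complex.I * ((∫ x, f x ∂(ComplexMeasure.im μ).toJordanDecomposition.posPart)
      - ∫ x, f x ∂(ComplexMeasure.im μ).toJordanDecomposition.negPart)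

/-- The total variation norm of a complex measure, defined by duality against
continuous functions bounded by one. -/
def tvNorm {α : Type*} [MeasurableSpace α] [TopologicalSpace α] (μ : ComplexMeasure α) : ℝ :=
  sSup {r | ∃ f : α → ℂ, Continuous f ∧ (∀ x, ‖f x‖ ≤ 1) ∧ r = ‖cintegral μ f‖}

/-- A complex measure is supported on a set `S` if it vanishes on measurable sets
disjoint from `S`. -/
def SupportedOn {α : Type*} [MeasurableSpace α] (μ : ComplexMeasure α) (S : Set α) : Prop :=
  ∀ t : Set α, MeasurableSet t → Disjoint t S → μ t = 0

/-- The Dirac measure at a point, as a complex measure. -/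
def cdirac {α : Type*} [MeasurableSpace α] (a : α) : ComplexMeasure α :=
  (MeasureTheory.Measure.dirac a).toSignedMeasure.toComplexMeasure 0

/-- The test function `p ↦ e^{-2πi l·(x + kτv)}`. -/
def testFn (d : ℕ) (τ : ℝ) (l : Fin d → ℤ) (k : ℤ) : PS d → ℂ :=
  fun p => Complex.exp (-(2 * (π : ℂ) * Complex.I) *
    ∑ j, (l j : ℂ) * ((p.1 j : ℂ) + (k : ℂ) * (τ : ℂ) * (p.2 j : ℂ)))

/-- The measurement `(𝒢 μ)_{l,k}`. -/
def Gmeas {d : ℕ} (τ : ℝ) (μ : ComplexMeasure (PS d)) (l : Fin d → ℤ) (k : ℤ) : ℂ :=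
  cintegral μ (testFn d τ l k)

/-- Two complex measures give the same measurements for all allowed frequencies
`‖l‖_∞ ≤ f_c` and time samples `|k| ≤ K`. -/
def SameMeas {d : ℕ} (K : ℕ) (τ : ℝ) (f_c : ℕ) (μ ν : ComplexMeasure (PS d)) : Prop :=
  ∀ l : Fin d → ℤ, (∀ j, |l j| ≤ (f_c : ℤ)) → ∀ k : ℤ, |k| ≤ (K : ℤ) →
    Gmeas τ μ l k = Gmeas τ ν l k

/-- The set of allowed frequencies `l ∈ ℤ^d`, `‖l‖_∞ ≤ f_c`. -/
def freqSet (d : ℕ) (f_c : ℕ) : Finset (Fin d → ℤ) :=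
  Fintype.piFinset fun _ => Finset.Icc (-(f_c : ℤ)) (f_c : ℤ)

/-- A function on phase space has dynamical form. -/
def DynamicalForm (d K : ℕ) (τ : ℝ) (f_c : ℕ) (q : PS d → ℂ) : Prop :=
  ∃ c : ℤ → (Fin d → ℤ) → ℂ, ∀ p : PS d,
    q p = ∑ k ∈ Finset.Icc (-(K : ℤ)) (K : ℤ), ∑ l ∈ freqSet d f_c,
      c k l * Complex.exp ((2 * (π : ℂ) * Complex.I) *
        ∑ j, (l j : ℂ) * ((p.1 j : ℂ) + (k : ℂ) * (τ : ℂ) * (p.2 j : ℂ)))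

/-- The canonical embedding of `𝕂` (either `ℝ` or `ℂ`) into `ℂ`. -/
def toC {𝕜 : Type*} [RCLike 𝕜] (a : 𝕜) : ℂ :=
  (RCLike.re a : ℝ) + (RCLike.im a : ℝ) * Complex.I



/-- Velocity component of the unique solution of two line equations. -/
def solv {d : ℕ} (τ : ℝ) (p₁ p₂ : PS d) (k₁ k₂ : ℤ) (j : Fin d) : ℝ :=
  ((p₁.1 j + (k₁ : ℝ) * τ * p₁.2 j) - (p₂.1 j + (k₂ : ℝ) * τ * p₂.2 j)) / (((k₁ : ℝ) - k₂) * τ)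

/-- The unique solution of two line equations with distinct time samples. -/
def sol {d : ℕ} (τ : ℝ) (p₁ p₂ : PS d) (k₁ k₂ : ℤ) : PS d :=
  (fun j => (p₁.1 j + (k₁ : ℝ) * τ * p₁.2 j) - (k₁ : ℝ) * τ * solv τ p₁ p₂ k₁ k₂ j,
   fun j => solv τ p₁ p₂ k₁ k₂ j)

lemma sol_eq {d : ℕ} {τ : ℝ} (hτ : τ ≠ 0) {p₁ p₂ g : PS d} {k₁ k₂ : ℤ} (hk : k₁ ≠ k₂)
    (h1 : ∀ j, (g.1 j - p₁.1 j) + (k₁ : ℝ) * τ * (g.2 j - p₁.2 j) = 0)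
    (h2 : ∀ j, (g.1 j - p₂.1 j) + (k₂ : ℝ) * τ * (g.2 j - p₂.2 j) = 0) :
    g = sol τ p₁ p₂ k₁ k₂ := by
  have hk' : ((k₁ : ℝ) - k₂) ≠ 0 := sub_ne_zero.mpr (by exact_mod_cast hk)
  have hv : ∀ j, g.2 j = solv τ p₁ p₂ k₁ k₂ j := by
    intro j
    rw [solv, eq_div_iff (mul_ne_zero hk' hτ)]
    linear_combination h1 j - h2 j
  have hx : ∀ j, g.1 j = (p₁.1 j + (k₁ : ℝ) * τ * p₁.2 j) - (k₁ : ℝ) * τ * solv τ p₁ p₂ k₁ k₂ j := by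
    intro j
    rw [← hv j]
    linear_combination h1 j
  exact Prod.ext (funext hx) (funext hv)

/-- The set of potential ghost particles of a configuration `T`, namely
`⋃_{P ∈ Ω} G(T ∪ {P})`, is finite. -/
theorem potential_ghost_particles_finite
    {d K N : ℕ} (hd : 1 ≤ d) (τ : ℝ) (hτ : 0 < τ)
    (Ks : Finset ℤ) (hKs : Ks ⊆ Finset.Icc (-(K : ℤ)) (K : ℤ)) (hcard : 3 ≤ Ks.card)
    (P : Fin N → PS d) (hmem : ∀ i, P i ∈ Omega d K τ) (hdist : Function.Injective P) :
    Set.Finite {g : PS d | ∃ p ∈ Omega d K τ,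
      IsGhost (K := K) τ (Fin.snoc P p) Ks g} := by
  classical
  have hτ' : τ ≠ 0 := ne_of_gt hτ
  apply Set.Finite.subset
    (Set.Finite.image (fun q : (Fin N × ℤ) × (Fin N × ℤ) => sol τ (P q.1.1) (P q.2.1) q.1.2 q.2.2)
      (((Set.finite_univ.prod Ks.finite_toSet)).prod (Set.finite_univ.prod Ks.finite_toSet)))
  rintro g ⟨p, hp, hgΩ, ι, hinj, hI⟩
  -- g belongs to every Lset in the intersection
  have hgmem : ∀ k ∈ Ks, g ∈ Lset d K τ ((Fin.snoc P p : Fin (N+1) → PS d) (ι k)) k := by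
    intro k hk
    have : g ∈ ⋂ k ∈ Ks, Lset d K τ ((Fin.snoc P p : Fin (N+1) → PS d) (ι k)) k := by
      rw [hI]; exact rfl
    exact Set.mem_iInter₂.mp this k hk
  -- at most one k ∈ Ks maps to the last index
  set F := Ks.filter (fun k => ¬ ι k = Fin.last N) with hF
  have hle : (Ks.filter (fun k => ι k = Fin.last N)).card ≤ 1 := by
    apply Finset.card_le_one.mpr
    intro a ha b hb
    simp only [Finset.mem_filter] at ha hb
    exact hinj ha.1 hb.1 (ha.2.trans hb.2.symm)
  have hFcard : 2 ≤ F.card := by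
    have := Finset.card_filter_add_card_filter_not
      (s := Ks) (p := fun k => ι k = Fin.last N)
    rw [hF]
    omega
  obtain ⟨k₁, hk₁, k₂, hk₂, hkne⟩ := Finset.one_lt_card.mp hFcard
  simp only [hF, Finset.mem_filter] at hk₁ hk₂
  obtain ⟨i₁, hi₁⟩ := Fin.exists_castSucc_eq.mpr hk₁.2
  obtain ⟨i₂, hi₂⟩ := Fin.exists_castSucc_eq.mpr hk₂.2
  have hg1 := hgmem k₁ hk₁.1
  have hg2 := hgmem k₂ hk₂.1
  rw [← hi₁, Fin.snoc_castSucc] at hg1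
  rw [← hi₂, Fin.snoc_castSucc] at hg2
  refine ⟨((i₁, k₁), (i₂, k₂)), ⟨⟨Set.mem_univ _, hk₁.1⟩, ⟨Set.mem_univ _, hk₂.1⟩⟩, ?_⟩
  exact (sol_eq hτ' hkne hg1.2 hg2.2).symm


end
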